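/- Let (τ_i)_{i≥1} be a sequence of nonnegative reals with only finitely many nonzero terms, let S = ∑_{i≥1} τ_i, and for each k ≥ 1 let X_k = ∑_{i≥1} C(i,k) τ_i where C(i,k) is the binomial coefficient. Then for every m ≥ 1, |S − ∑_{k=1}^{m} (−1)^{k−1} X_k| ≤ X_m. -/

import Mathlib

lemma alt_sum_choose (j : ℕ) : ∀ m, 1 ≤ m →
    ∑ k ∈ Finset.Icc 1 m, (-1:ℝ)^(k-1) * (Nat.choose (j+1) k : ℝ)
      = 1 - (-1:ℝ)^m * (Nat.choose j m : ℝ) := by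
  intro m hm
  induction m with
  | zero => omega
  | succ m ih =>
    rcases Nat.lt_or_ge 1 (m+1) with h | h
    · have hm1 : 1 ≤ m := by omega
      rw [Finset.sum_Icc_succ_top (by omega), ih hm1]
      have : (Nat.choose (j+1) (m+1) : ℝ) = Nat.choose j m + Nat.choose j (m+1) := by
        rw [Nat.choose_succ_succ]; push_cast; ring
      rw [this]
      simp only [Nat.add_sub_cancel]
      ring
    · have : m = 0 := by omega
      subst this
      simp [Nat.choose_one_right]; ring

theorem stmt_4 (τ : ℕ → ℝ) (hτ0 : τ 0 = 0) (hτ : ∀ i, 0 ≤ τ i)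
    (hfin : (Function.support τ).Finite)
    (X : ℕ → ℝ) (hX : ∀ k, X k = ∑' i : ℕ, (Nat.choose i k : ℝ) * τ i)
    (m : ℕ) (hm : 1 ≤ m) :
    |(∑' i : ℕ, τ i) - ∑ k ∈ Finset.Icc 1 m, (-1 : ℝ) ^ (k - 1) * X k| ≤ X m := by
  classical
  set s := hfin.toFinset with hs
  have hmem : ∀ i, i ∉ s → τ i = 0 := by
    intro i hi
    by_contra h
    exact hi (hfin.mem_toFinset.mpr h)
  have hS : (∑' i : ℕ, τ i) = ∑ i ∈ s, τ i := tsum_eq_sum hmem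
  have hXk : ∀ k, X k = ∑ i ∈ s, (Nat.choose i k : ℝ) * τ i := by
    intro k
    rw [hX k]
    exact tsum_eq_sum (by intro i hi; rw [hmem i hi]; ring)
  have hpos : ∀ i ∈ s, 1 ≤ i := by
    intro i hi
    rcases Nat.eq_zero_or_pos i with h | h
    · exfalso; subst h
      exact (hfin.mem_toFinset.mp hi) hτ0
    · exact h
  -- compute the alternating sum
  have key : ∑ k ∈ Finset.Icc 1 m, (-1 : ℝ) ^ (k - 1) * X k
      = ∑ i ∈ s, τ i * (1 - (-1:ℝ)^m * (Nat.choose (i-1) m : ℝ)) := by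
    have : ∑ k ∈ Finset.Icc 1 m, (-1 : ℝ) ^ (k - 1) * X k
        = ∑ i ∈ s, ∑ k ∈ Finset.Icc 1 m, (-1 : ℝ) ^ (k - 1) * ((Nat.choose i k : ℝ) * τ i) := by
      rw [Finset.sum_comm]
      exact Finset.sum_congr rfl fun k _ => by rw [hXk k, Finset.mul_sum]
    rw [this]
    refine Finset.sum_congr rfl fun i hi => ?_
    have hi1 := hpos i hi
    obtain ⟨j, rfl⟩ : ∃ j, i = j + 1 := ⟨i - 1, by omega⟩
    have := alt_sum_choose j m hm
    calc ∑ k ∈ Finset.Icc 1 m, (-1 : ℝ) ^ (k - 1) * ((Nat.choose (j+1) k : ℝ) * τ (j+1))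
        = (∑ k ∈ Finset.Icc 1 m, (-1 : ℝ) ^ (k - 1) * (Nat.choose (j+1) k : ℝ)) * τ (j+1) := by
          rw [Finset.sum_mul]; exact Finset.sum_congr rfl fun k _ => by ring
      _ = τ (j+1) * (1 - (-1:ℝ)^m * (Nat.choose ((j+1)-1) m : ℝ)) := by
          rw [this]; simp; ring
  rw [hS, key, ← Finset.sum_sub_distrib]
  have hdiff : ∀ i ∈ s, τ i - τ i * (1 - (-1:ℝ)^m * (Nat.choose (i-1) m : ℝ))
      = τ i * (-1:ℝ)^m * (Nat.choose (i-1) m : ℝ) := fun i _ => by ring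
  rw [Finset.sum_congr rfl hdiff]
  calc |∑ i ∈ s, τ i * (-1:ℝ)^m * (Nat.choose (i-1) m : ℝ)|
      ≤ ∑ i ∈ s, |τ i * (-1:ℝ)^m * (Nat.choose (i-1) m : ℝ)| := Finset.abs_sum_le_sum_abs _ _
    _ ≤ ∑ i ∈ s, (Nat.choose i m : ℝ) * τ i := by
        refine Finset.sum_le_sum fun i hi => ?_
        rw [abs_mul, abs_mul, abs_pow, abs_neg, abs_one, one_pow, mul_one,
          abs_of_nonneg (hτ i), abs_of_nonneg (by positivity : (0:ℝ) ≤ (Nat.choose (i-1) m : ℝ))]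
        rw [mul_comm]
        gcongr
        · exact hτ i
        · exact Nat.sub_le i 1
    _ = X m := (hXk m).symm
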